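/- For every odd integer k ≥ 3, all reals s_3, s_5, …, s_k (one for each odd index between 3 and k) and every positive real δ > 0, there exists an integer m and reals ω_1, …, ω_m such that Σ_{i∈[m]} ω_i^ℓ = s_ℓ for every odd integer ℓ with 3 ≤ ℓ ≤ k, and Σ_{i∈[m]} ω_i^{k+1} ≤ δ. -/

import Mathlib

open MeasureTheory

/-- A kernel: a bounded measurable symmetric real function (its values on `[0,1]²` are the
relevant ones). -/
structure Kernel : Type where
  toFun : ℝ → ℝ → ℝ
  symm : ∀ x y, toFun x y = toFun y x
  measurable : Measurable (Function.uncurry toFun)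
  bounded : ∃ C : ℝ, ∀ x y, |toFun x y| ≤ C

/-- A kernel is nonzero if it is not a.e. zero on `[0,1]²`. -/
def Kernel.Nonzero (U : Kernel) : Prop :=
  ¬ (∀ᵐ p : ℝ × ℝ ∂(volume.restrict ((Set.Icc (0:ℝ) 1) ×ˢ (Set.Icc (0:ℝ) 1))),
      U.toFun p.1 p.2 = 0)

/-- A kernel is balanced if its marginals vanish a.e. -/
def Kernel.Balanced (U : Kernel) : Prop :=
  ∀ᵐ x ∂(volume.restrict (Set.Icc (0:ℝ) 1)), (∫ y in Set.Icc (0:ℝ) 1, U.toFun x y) = 0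

/-- The product of the kernel values over the edges of a graph. -/
noncomputable def edgeProd {V : Type} (H : SimpleGraph V) (U : Kernel) (x : V → ℝ) : ℝ :=
  ∏ᶠ e ∈ H.edgeSet, Sym2.lift ⟨fun u v => U.toFun (x u) (x v), fun u v => U.symm (x u) (x v)⟩ e

/-- The homomorphism density `t(H, U)` of a finite simple graph in a kernel. -/
noncomputable def homDensity {V : Type} [Fintype V] (H : SimpleGraph V) (U : Kernel) : ℝ :=
  ∫ x in (Set.univ.pi fun _ : V => Set.Icc (0:ℝ) 1), edgeProd H U x

open Classical in
/-- The rooted homomorphism density `t^H_U(z)` of a graph `H` rooted at `w`. -/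
noncomputable def rootedDensity {V : Type} [Fintype V] (H : SimpleGraph V) (w : V)
    (U : Kernel) (z : ℝ) : ℝ :=
  ∫ x in (Set.univ.pi fun _ : {v : V // v ≠ w} => Set.Icc (0:ℝ) 1),
    edgeProd H U (fun v => if h : v = w then z else x ⟨v, h⟩)

/-- A bundled finite simple graph. -/
structure FinGraph : Type 1 where
  V : Type
  fintypeV : Fintype V
  G : SimpleGraph V

attribute [instance] FinGraph.fintypeV

def FinGraph.of {V : Type} [h : Fintype V] (G : SimpleGraph V) : FinGraph := ⟨V, h, G⟩

noncomputable def FinGraph.density (G : FinGraph) (U : Kernel) : ℝ := homDensity G.G U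

/-- Number of edges of a bundled finite graph. -/
noncomputable def FinGraph.edges (G : FinGraph) : ℕ := G.G.edgeSet.ncard

instance finiteSubgraph {V : Type} [Finite V] (G : SimpleGraph V) : Finite G.Subgraph := by
  classical
  exact Finite.of_injective (fun G' => (G'.verts, G'.Adj))
    (fun a b h => SimpleGraph.Subgraph.ext (congrArg Prod.fst h) (congrArg Prod.snd h))

open Classical in
/-- The multiset of all subgraphs of `G` having exactly `l` edges. -/
noncomputable def FinGraph.subs (G : FinGraph) (l : ℕ) : Multiset FinGraph :=
  ((Set.toFinite {G' : G.G.Subgraph | G'.edgeSet.ncard = l}).toFinset.val).map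
    fun G' => FinGraph.of G'.coe

/-- `D` is an `l`-deck: a multiset of graphs each with exactly `l` edges. -/
def IsDeck (D : Multiset FinGraph) (l : ℕ) : Prop := ∀ G ∈ D, G.edges = l

/-- The `l`-deck of a deck `D`: all `l`-edge subgraphs of the graphs of `D`. -/
noncomputable def subDeck (D : Multiset FinGraph) (l : ℕ) : Multiset FinGraph :=
  D.bind fun G => G.subs l

/-- `s_D(H)`: the number of subgraphs isomorphic to `H` of the graphs in `D`. -/
noncomputable def sD (D : Multiset FinGraph) (H : FinGraph) : ℕ :=
  (D.map fun G => Set.ncard {G' : G.G.Subgraph | Nonempty (G'.coe ≃g H.G)}).sum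

/-- The coefficient `c^D_{U,l} = Σ_{G ∈ D} Σ_{H' ∈ G[l]} t(H', U)`. -/
noncomputable def coeff (D : Multiset FinGraph) (U : Kernel) (l : ℕ) : ℝ :=
  ((subDeck D l).map fun H => H.density U).sum

/-- All the coefficients `c^D_{U,2}, c^D_{U,4}, …, c^D_{U,l}` vanish. -/
def AllCoeffZero (D : Multiset FinGraph) (U : Kernel) (l : ℕ) : Prop :=
  ∀ k, Even k → 0 < k → k ≤ l → coeff D U k = 0

/-- Among `c^D_{U,2}, c^D_{U,4}, …, c^D_{U,l}` not all vanish and the first nonzero one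
is positive. -/
def FirstNonzeroPos (D : Multiset FinGraph) (U : Kernel) (l : ℕ) : Prop :=
  ∃ k, Even k ∧ 0 < k ∧ k ≤ l ∧ 0 < coeff D U k ∧
    ∀ j, Even j → 0 < j → j < k → coeff D U j = 0

/-- Among `c^D_{U,2}, c^D_{U,4}, …, c^D_{U,l}` not all vanish and the first nonzero one
is negative. -/
def FirstNonzeroNeg (D : Multiset FinGraph) (U : Kernel) (l : ℕ) : Prop :=
  ∃ k, Even k ∧ 0 < k ∧ k ≤ l ∧ coeff D U k < 0 ∧
    ∀ j, Even j → 0 < j → j < k → coeff D U j = 0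

def ClassI (D : Multiset FinGraph) (l : ℕ) : Prop :=
  ∀ U : Kernel, U.Nonzero → FirstNonzeroPos D U l

def ClassII (D : Multiset FinGraph) (l : ℕ) : Prop :=
  ∃ U : Kernel, FirstNonzeroNeg D U l

def ClassIII (D : Multiset FinGraph) (l : ℕ) : Prop :=
  (∃ U : Kernel, U.Nonzero ∧ AllCoeffZero D U l) ∧
  ∀ U : Kernel, AllCoeffZero D U l ∨ FirstNonzeroPos D U l

/-- The cycle `C_n` as a bundled graph. -/
def cycleF (n : ℕ) : FinGraph := FinGraph.of (SimpleGraph.cycleGraph n)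

/-- The path `P_n` with `n` edges as a bundled graph. -/
def pathF (n : ℕ) : FinGraph := FinGraph.of (SimpleGraph.pathGraph (n+1))

/-- Gluing two graphs by identifying the vertex `v` of `G` with the vertex `w` of `H`. -/
def glue {V W : Type} (G : SimpleGraph V) (H : SimpleGraph W) (v : V) (w : W) :
    SimpleGraph (V ⊕ {x : W // x ≠ w}) where
  Adj a b :=
    Sum.elim (fun a => Sum.elim (fun b => G.Adj a b) (fun b => a = v ∧ H.Adj w b.1) b)
             (fun a => Sum.elim (fun b => b = v ∧ H.Adj w a.1) (fun b => H.Adj a.1 b.1) b) a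
  symm := by
    constructor
    rintro (a | a) (b | b) h
    · exact G.adj_symm h
    · exact h
    · exact h
    · exact H.adj_symm h
  loopless := by
    constructor
    rintro (a | a) h
    · exact G.loopless.irrefl a h
    · exact H.loopless.irrefl a.1 h

/-- Disjoint union of two simple graphs. -/
def disjSum {V W : Type} (G : SimpleGraph V) (H : SimpleGraph W) : SimpleGraph (V ⊕ W) where
  Adj a b :=
    Sum.elim (fun a => Sum.elim (fun b => G.Adj a b) (fun _ => False) b)
             (fun a => Sum.elim (fun _ => False) (fun b => H.Adj a b) b) a
  symm := by
    constructor
    rintro (a | a) (b | b) h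
    · exact G.adj_symm h
    · exact h.elim
    · exact h.elim
    · exact H.adj_symm h
  loopless := by
    constructor
    rintro (a | a) h
    · exact G.loopless.irrefl a h
    · exact H.loopless.irrefl a h

/-- Disjoint union `G ∪ H` of bundled graphs. -/
noncomputable def FinGraph.disjU (G H : FinGraph) : FinGraph := FinGraph.of (disjSum G.G H.G)

open Classical in
/-- `C_k ⊕ P_n ⊕ C_l`: two cycles joined by a path with `n` edges; for `n = 0` this is
`C_k ⊕ C_l`, two cycles sharing one vertex. (Junk value if `k = 0` or `l = 0`.) -/
noncomputable def cpcF (k n l : ℕ) : FinGraph :=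
  if h : 0 < k ∧ 0 < l then
    let A := glue (SimpleGraph.cycleGraph k) (SimpleGraph.pathGraph (n+1)) ⟨0, h.1⟩ 0
    let ep : Fin k ⊕ {x : Fin (n+1) // x ≠ 0} :=
      if hn : n = 0 then Sum.inl ⟨0, h.1⟩
      else Sum.inr ⟨Fin.last n, fun hc => hn (by simpa using congrArg Fin.val hc)⟩
    FinGraph.of (glue A (SimpleGraph.cycleGraph l) ep ⟨0, h.2⟩)
  else FinGraph.of (⊥ : SimpleGraph (Fin 0))


section PowerSumAux

noncomputable section

/-- Power sum of a multiset. -/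
def psum (M : Multiset ℝ) (p : ℕ) : ℝ := (M.map (· ^ p)).sum

lemma psum_add (M N : Multiset ℝ) (p : ℕ) : psum (M + N) p = psum M p + psum N p := by
  simp [psum]

lemma psum_nsmul (n : ℕ) (M : Multiset ℝ) (p : ℕ) : psum (n • M) p = n * psum M p := by
  simp [psum, Multiset.map_nsmul, Multiset.sum_nsmul, nsmul_eq_mul]

lemma psum_map (c : ℝ) (M : Multiset ℝ) (p : ℕ) :
    psum (M.map (fun x => c * x)) p = c ^ p * psum M p := by
  simp only [psum, Multiset.map_map, Function.comp]
  rw [← Multiset.sum_map_mul_left]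
  congr 1; ext x; ring

/-- Killing factor. -/
def kf (j p : ℕ) : ℝ := 1 + 2 ^ j * (-2⁻¹) ^ p

lemma psum_kill (j p : ℕ) (M : Multiset ℝ) :
    psum (M + 2 ^ j • (M.map (fun x => (-2⁻¹) * x))) p = kf j p * psum M p := by
  rw [psum_add, psum_nsmul, psum_map, kf]
  push_cast
  ring

lemma iter_kill (S : Finset ℕ) (M : Multiset ℝ) :
    ∃ M' : Multiset ℝ, ∀ p, psum M' p = (∏ j ∈ S, kf j p) * psum M p := by
  classical
  induction S using Finset.induction_on with
  | empty => exact ⟨M, by simp⟩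
  | @insert j S hj ih =>
    obtain ⟨M', hM'⟩ := ih
    refine ⟨M' + 2 ^ j • (M'.map (fun x => (-2⁻¹) * x)), fun p => ?_⟩
    rw [psum_kill, hM', Finset.prod_insert hj]
    ring

lemma kf_self (j : ℕ) (hj : Odd j) : kf j j = 0 := by
  rw [kf]
  have : ((-2⁻¹ : ℝ)) ^ j = -(2⁻¹) ^ j := hj.neg_pow _
  rw [this]
  have : (2 : ℝ) ^ j * (2⁻¹ : ℝ) ^ j = 1 := by
    rw [← mul_pow]; norm_num
  rw [mul_neg, this]; ring

lemma kf_ne (j i : ℕ) (hi : Odd i) (hne : j ≠ i) : kf j i ≠ 0 := by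
  rw [kf]
  have : ((-2⁻¹ : ℝ)) ^ i = -(2⁻¹) ^ i := hi.neg_pow _
  rw [this, mul_neg, ← sub_eq_add_neg, sub_ne_zero]
  intro h
  field_simp at h
  rw [div_pow, one_pow, mul_one_div, eq_comm, div_eq_one_iff_eq (by positivity)] at h
  exact hne (Nat.pow_right_injective (le_refl 2) (by exact_mod_cast h))

lemma kf_even_pos (j p : ℕ) (hp : Even p) : 0 < kf j p := by
  rw [kf]
  have : ((-2⁻¹ : ℝ)) ^ p = (2⁻¹) ^ p := hp.neg_pow _
  rw [this]
  positivity

lemma exists_odd_root (ℓ : ℕ) (hℓ : Odd ℓ) (r : ℝ) : ∃ a : ℝ, a ^ ℓ = r := by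
  have hℓ0 : ℓ ≠ 0 := by rintro rfl; simp [Nat.odd_iff] at hℓ
  rcases le_or_gt 0 r with hr | hr
  · refine ⟨r ^ ((ℓ : ℝ)⁻¹), ?_⟩
    rw [← Real.rpow_natCast (r ^ ((ℓ:ℝ)⁻¹)) ℓ, ← Real.rpow_mul hr,
      inv_mul_cancel₀ (by exact_mod_cast hℓ0), Real.rpow_one]
  · refine ⟨-((-r) ^ ((ℓ : ℝ)⁻¹)), ?_⟩
    rw [hℓ.neg_pow, ← Real.rpow_natCast ((-r) ^ ((ℓ:ℝ)⁻¹)) ℓ, ← Real.rpow_mul (by linarith),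
      inv_mul_cancel₀ (by exact_mod_cast hℓ0), Real.rpow_one, neg_neg]

lemma key (k ℓ : ℕ) (hk1 : Even (k+1)) (hℓo : Odd ℓ) (hℓ3 : 3 ≤ ℓ) (hℓk : ℓ ≤ k)
    (s δ' : ℝ) (hδ : 0 < δ') :
    ∃ M : Multiset ℝ,
      psum M ℓ = s ∧
      (∀ i, Odd i → 3 ≤ i → i ≤ k → i ≠ ℓ → psum M i = 0) ∧
      psum M (k+1) ≤ δ' := by
  classical
  set S : Finset ℕ := ((Finset.Icc 3 k).filter (fun j => Odd j)).erase ℓ with hS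
  set C : ℝ := ∏ j ∈ S, kf j ℓ with hC
  set D : ℝ := ∏ j ∈ S, kf j (k+1) with hD
  have hSodd : ∀ j ∈ S, Odd j := fun j hj =>
    (Finset.mem_filter.mp (Finset.mem_of_mem_erase hj)).2
  have hSne : ∀ j ∈ S, j ≠ ℓ := fun j hj => Finset.ne_of_mem_erase hj
  have hC0 : C ≠ 0 := Finset.prod_ne_zero_iff.mpr (fun j hj => kf_ne j ℓ hℓo (hSne j hj))
  have hD0 : 0 < D := Finset.prod_pos (fun j hj => kf_even_pos j (k+1) hk1)
  have habs : (0:ℝ) < |C| := abs_pos.mpr hC0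
  set K : ℝ := D * |s| / |C| with hK
  have hK0 : 0 ≤ K := by positivity
  set ε : ℝ := min 1 (δ' / (K + 1)) with hε
  have hε0 : 0 < ε := lt_min one_pos (by positivity)
  have hε1 : ε ≤ 1 := min_le_left _ _
  have hKε : K * ε ≤ δ' := by
    have h1 : K * ε ≤ K * (δ' / (K + 1)) :=
      mul_le_mul_of_nonneg_left (min_le_right _ _) hK0
    have h2 : K * (δ' / (K + 1)) = δ' * (K / (K + 1)) := by ring
    have h3 : K / (K + 1) ≤ 1 := (div_le_one (by linarith)).mpr (by linarith)
    calc K * ε ≤ δ' * (K / (K + 1)) := by rw [← h2]; exact h1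
      _ ≤ δ' * 1 := mul_le_mul_of_nonneg_left h3 hδ.le
      _ = δ' := mul_one _
  obtain ⟨n, hn⟩ := exists_nat_ge (|s| / (|C| * ε ^ ℓ))
  set N : ℕ := n + 1 with hN
  have hNpos : (0:ℝ) < N := by positivity
  obtain ⟨a, ha⟩ := exists_odd_root ℓ hℓo (s / (N * C))
  obtain ⟨M', hM'⟩ := iter_kill S {a}
  have hsingle : ∀ p, psum ({a} : Multiset ℝ) p = a ^ p := by intro p; simp [psum]
  refine ⟨N • M', ?_, ?_, ?_⟩
  · rw [psum_nsmul, hM', hsingle, ha, ← hC]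
    field_simp
  · intro i hio hi3 hik hine
    have hiS : i ∈ S := Finset.mem_erase.mpr ⟨hine,
      Finset.mem_filter.mpr ⟨Finset.mem_Icc.mpr ⟨hi3, hik⟩, hio⟩⟩
    have hz : (∏ j ∈ S, kf j i) = 0 :=
      Finset.prod_eq_zero hiS (kf_self i hio)
    rw [psum_nsmul, hM', hz]
    ring
  · rw [psum_nsmul, hM', hsingle, ← hD]
    have haℓ : |a| ^ ℓ = |s| / (N * |C|) := by
      rw [← abs_pow, ha, abs_div, abs_mul, Nat.abs_cast]
    have hNge : |s| / (|C| * ε ^ ℓ) ≤ N := by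
      calc |s| / (|C| * ε ^ ℓ) ≤ n := hn
        _ ≤ N := by exact_mod_cast Nat.le_succ n
    have hεℓ : (0:ℝ) < ε ^ ℓ := by positivity
    have haε : |a| ≤ ε := by
      have h1 : |a| ^ ℓ ≤ ε ^ ℓ := by
        rw [haℓ, div_le_iff₀ (by positivity)]
        have := (div_le_iff₀ (by positivity : (0:ℝ) < |C| * ε ^ ℓ)).mp hNge
        linarith [this]
      exact le_of_pow_le_pow_left₀ (by omega) hε0.le h1
    have hsplit : k + 1 = ℓ + (k + 1 - ℓ) := by omega
    have hapow : a ^ (k+1) = |a| ^ ℓ * |a| ^ (k + 1 - ℓ) := by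
      rw [← pow_add, ← hsplit, hk1.pow_abs]
    have hfinal : (N:ℝ) * (D * a ^ (k+1)) = K * |a| ^ (k + 1 - ℓ) := by
      rw [hapow, haℓ, hK]
      field_simp
    rw [hfinal]
    have hb1 : |a| ^ (k + 1 - ℓ) ≤ ε ^ (k + 1 - ℓ) :=
      pow_le_pow_left₀ (abs_nonneg a) haε _
    have hb2 : ε ^ (k + 1 - ℓ) ≤ ε := by
      have := pow_le_pow_of_le_one hε0.le hε1 (by omega : 1 ≤ k + 1 - ℓ)
      simpa using this
    calc K * |a| ^ (k + 1 - ℓ) ≤ K * ε := by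
          exact mul_le_mul_of_nonneg_left (hb1.trans hb2) hK0
      _ ≤ δ' := hKε

lemma psum_finsetSum {α : Type*} (t : Finset α) (g : α → Multiset ℝ) (p : ℕ) :
    psum (∑ x ∈ t, g x) p = ∑ x ∈ t, psum (g x) p := by
  classical
  induction t using Finset.induction_on with
  | empty => simp [psum]
  | @insert x t hx ih => rw [Finset.sum_insert hx, psum_add, ih, Finset.sum_insert hx]

lemma sum_fin_pow (l : List ℝ) (p : ℕ) :
    ∑ i : Fin l.length, l.get i ^ p = psum (↑l) p := by
  rw [← Fin.sum_ofFn (fun i : Fin l.length => l.get i ^ p)]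
  have h : List.ofFn (fun i : Fin l.length => l.get i ^ p)
      = (List.ofFn l.get).map (· ^ p) := by
    rw [List.map_ofFn]; rfl
  rw [h, List.ofFn_get]
  simp [psum]

theorem sums_of_powers' (k : ℕ) (hk : Odd k) (h3 : 3 ≤ k) (s : ℕ → ℝ) (δ : ℝ) (hδ : 0 < δ) :
    ∃ (m : ℕ) (ω : Fin m → ℝ),
      (∀ l : ℕ, Odd l → 3 ≤ l → l ≤ k → ∑ i, ω i ^ l = s l) ∧
      (∑ i, ω i ^ (k+1) ≤ δ) := by
  classical
  have hk1 : Even (k + 1) := Odd.add_one hk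
  set L : Finset ℕ := (Finset.Icc 3 k).filter (fun j => Odd j) with hL
  have hδ' : 0 < δ / (k + 1) := by positivity
  have hex : ∀ ℓ : ℕ, ∃ M : Multiset ℝ, ℓ ∈ L →
      psum M ℓ = s ℓ ∧ (∀ i, Odd i → 3 ≤ i → i ≤ k → i ≠ ℓ → psum M i = 0) ∧
      psum M (k+1) ≤ δ / (k + 1) := by
    intro ℓ
    by_cases h : ℓ ∈ L
    · obtain ⟨hmem, ho⟩ := Finset.mem_filter.mp h
      obtain ⟨h3', hk'⟩ := Finset.mem_Icc.mp hmem
      obtain ⟨M, hM⟩ := key k ℓ hk1 ho h3' hk' (s ℓ) _ hδ'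
      exact ⟨M, fun _ => hM⟩
    · exact ⟨0, fun hc => absurd hc h⟩
  choose F hF using hex
  set M : Multiset ℝ := ∑ ℓ ∈ L, F ℓ with hM
  have hMl : ∀ l, Odd l → 3 ≤ l → l ≤ k → psum M l = s l := by
    intro l hlo hl3 hlk
    have hlL : l ∈ L := Finset.mem_filter.mpr ⟨Finset.mem_Icc.mpr ⟨hl3, hlk⟩, hlo⟩
    rw [hM, psum_finsetSum, Finset.sum_eq_single l
      (fun b hb hbne => (hF b hb).2.1 l hlo hl3 hlk hbne.symm)
      (fun h => absurd hlL h)]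
    exact (hF l hlL).1
  have hMk : psum M (k+1) ≤ δ := by
    rw [hM, psum_finsetSum]
    have hcard : (L.card : ℝ) ≤ (k + 1 : ℕ) := by
      have h1 : L.card ≤ (Finset.Icc 3 k).card := Finset.card_filter_le _ _
      have h2 : (Finset.Icc 3 k).card ≤ k + 1 := by rw [Nat.card_Icc]; omega
      exact_mod_cast h1.trans h2
    calc ∑ ℓ ∈ L, psum (F ℓ) (k+1) ≤ ∑ _ℓ ∈ L, δ / (k+1) :=
          Finset.sum_le_sum (fun ℓ hℓ => (hF ℓ hℓ).2.2)
      _ = L.card * (δ / (k+1)) := by rw [Finset.sum_const, nsmul_eq_mul]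
      _ ≤ (k + 1 : ℕ) * (δ / (k+1)) := mul_le_mul_of_nonneg_right hcard hδ'.le
      _ = δ := by push_cast; field_simp
  refine ⟨M.toList.length, fun i => M.toList.get i, ?_, ?_⟩
  · intro l hlo hl3 hlk
    rw [sum_fin_pow, Multiset.coe_toList]
    exact hMl l hlo hl3 hlk
  · rw [sum_fin_pow, Multiset.coe_toList]
    exact hMk

end

end PowerSumAux

/-- For every odd `k ≥ 3`, all reals `s₃, s₅, …, s_k` and every `δ > 0`, there
exist `m` and reals `ω₁, …, ω_m` whose `ℓ`-th power sum equals `s_ℓ` for every odd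
`3 ≤ ℓ ≤ k` and whose `(k+1)`-th power sum is at most `δ`. -/
theorem sums_of_powers (k : ℕ) (hk : Odd k) (h3 : 3 ≤ k) (s : ℕ → ℝ) (δ : ℝ) (hδ : 0 < δ) :
    ∃ (m : ℕ) (ω : Fin m → ℝ),
      (∀ l : ℕ, Odd l → 3 ≤ l → l ≤ k → ∑ i, ω i ^ l = s l) ∧
      (∑ i, ω i ^ (k+1) ≤ δ) := by
  exact sums_of_powers' k hk h3 s δ hδ
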